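/- Optimal Bayesian discriminator: let S be a finite nonempty type and let d_E and d_O be probability mass functions on S with d_E(s) > 0 and d_O(s) > 0 for all s. Define the discriminator objective J(c) = Σ_s d_E(s)·log c(s) + Σ_s d_O(s)·log(1 − c(s)) for functions c : S → ℝ with 0 < c(s) < 1 for all s. Then the function c*(s) = d_E(s) / ( d_E(s) + d_O(s) ) satisfies 0 < c*(s) < 1 for all s and J(c*) ≥ J(c) for every c : S → ℝ with 0 < c(s) < 1 for all s. -/

import Mathlib

lemma pointwise_opt (a b c : ℝ) (ha : 0 < a) (hb : 0 < b)
    (hc0 : 0 < c) (hc1 : c < 1) :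
    a * Real.log c + b * Real.log (1 - c)
      ≤ a * Real.log (a / (a + b)) + b * Real.log (b / (a + b)) := by
  have hab : 0 < a + b := by linarith
  have h1c : 0 < 1 - c := by linarith
  have h1 : Real.log (c * (a + b) / a) = Real.log c - Real.log (a / (a + b)) := by
    rw [Real.log_div (by positivity) ha.ne', Real.log_mul hc0.ne' hab.ne',
      Real.log_div ha.ne' hab.ne']
    ring
  have h2 : Real.log ((1 - c) * (a + b) / b) = Real.log (1 - c) - Real.log (b / (a + b)) := by
    rw [Real.log_div (by positivity) hb.ne', Real.log_mul h1c.ne' hab.ne',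
      Real.log_div hb.ne' hab.ne']
    ring
  have l1 : Real.log (c * (a + b) / a) ≤ c * (a + b) / a - 1 :=
    Real.log_le_sub_one_of_pos (by positivity)
  have l2 : Real.log ((1 - c) * (a + b) / b) ≤ (1 - c) * (a + b) / b - 1 :=
    Real.log_le_sub_one_of_pos (by positivity)
  have e1 : a * (c * (a + b) / a - 1) = c * (a + b) - a := by field_simp
  have e2 : b * ((1 - c) * (a + b) / b - 1) = (1 - c) * (a + b) - b := by field_simp
  nlinarith [mul_le_mul_of_nonneg_left l1 ha.le, mul_le_mul_of_nonneg_left l2 hb.le]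

/-- Optimal Bayesian discriminator: `c*(s) = d_E(s)/(d_E(s)+d_O(s))` maximizes the
logistic discrimination objective over all `c` with values in `(0,1)`. -/
theorem optimal_bayesian_discriminator
    {S : Type*} [Fintype S] [Nonempty S]
    (dE dO : S → ℝ)
    (hE0 : ∀ s, 0 < dE s) (hE1 : ∑ s : S, dE s = 1)
    (hO0 : ∀ s, 0 < dO s) (hO1 : ∑ s : S, dO s = 1)
    (cstar : S → ℝ) (hcstar : ∀ s, cstar s = dE s / (dE s + dO s)) :
    (∀ s, 0 < cstar s ∧ cstar s < 1) ∧
    (∀ c : S → ℝ, (∀ s, 0 < c s ∧ c s < 1) →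
      (∑ s : S, dE s * Real.log (c s)) + (∑ s : S, dO s * Real.log (1 - c s))
        ≤ (∑ s : S, dE s * Real.log (cstar s)) +
            (∑ s : S, dO s * Real.log (1 - cstar s))) := by
  have hab : ∀ s, 0 < dE s + dO s := fun s => by have := hE0 s; have := hO0 s; linarith
  have hone : ∀ s, 1 - cstar s = dO s / (dE s + dO s) := by
    intro s
    rw [hcstar s]
    have := (hab s).ne'
    field_simp
    ring
  constructor
  · intro s
    rw [hcstar s]
    constructor
    · exact div_pos (hE0 s) (hab s)
    · rw [div_lt_one (hab s)]; have := hO0 s; linarith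
  · intro c hc
    rw [← Finset.sum_add_distrib, ← Finset.sum_add_distrib]
    apply Finset.sum_le_sum
    intro s _
    rw [hone s, hcstar s]
    exact pointwise_opt _ _ _ (hE0 s) (hO0 s) (hc s).1 (hc s).2
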